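/- Let C ∈ ℂ, let Ω ⊆ ℂ² be a nonempty connected open set on which x ≠ 0 and x + C ≠ 0, and let η : Ω → ℂ be holomorphic with ∂η/∂y ≠ 0 on Ω. Suppose that for all (x,y) ∈ Ω and all p ∈ ℂ: η_xx + 2p·η_xy + p²·η_yy + (p/x + 4y²/x³)·η_y = (η_x + p·η_y)/(x + C) + 4·η(x,y)²/(x + C)³. Then C = 0 and η(x,y) = y for all (x,y) ∈ Ω. -/

import Mathlib

/-- Partial derivative in the first variable of a function `ℂ × ℂ → ℂ`. -/
noncomputable def cpX (η : ℂ × ℂ → ℂ) (q : ℂ × ℂ) : ℂ :=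
  deriv (fun t => η (t, q.2)) q.1

/-- Partial derivative in the second variable of a function `ℂ × ℂ → ℂ`. -/
noncomputable def cpY (η : ℂ × ℂ → ℂ) (q : ℂ × ℂ) : ℂ :=
  deriv (fun t => η (q.1, t)) q.2

section Helpers
open Metric Filter

lemma constOf {f : ℂ → ℂ} {s : Set ℂ} (hs : Convex ℝ s) (hso : IsOpen s)
    (hf : ∀ z ∈ s, HasDerivAt f 0 z) {a c : ℂ} (ha : a ∈ s) (hc : c ∈ s) : f a = f c := by
  refine hs.is_const_of_fderivWithin_eq_zero
    (fun z hz => ((hf z hz).differentiableAt).differentiableWithinAt) (fun z hz => ?_) ha hc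
  rw [fderivWithin_of_isOpen hso hz, (hf z hz).hasFDerivAt.fderiv]
  ext
  simp

lemma aux (C : ℂ) (Ω : Set (ℂ × ℂ)) (hΩo : IsOpen Ω)
    (hx0 : ∀ q ∈ Ω, q.1 ≠ 0) (hxC : ∀ q ∈ Ω, q.1 + C ≠ 0)
    (η : ℂ × ℂ → ℂ) (hη : DifferentiableOn ℂ η Ω)
    (hηy : ∀ q ∈ Ω, cpY η q ≠ 0)
    (hpde : ∀ q ∈ Ω, ∀ p : ℂ,
      cpX (cpX η) q + 2 * p * cpX (cpY η) q + p^2 * cpY (cpY η) q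
        + (p / q.1 + 4 * q.2^2 / q.1^3) * cpY η q
      = (cpX η q + p * cpY η q) / (q.1 + C) + 4 * (η q)^2 / (q.1 + C)^3)
    (x₀ y₀ : ℂ) (hq₀ : (x₀, y₀) ∈ Ω) : C = 0 ∧ η (x₀, y₀) = y₀ := by
  obtain ⟨r, hr0, hball⟩ := Metric.isOpen_iff.mp hΩo (x₀, y₀) hq₀
  have hmem : ∀ x ∈ ball x₀ r, ∀ t ∈ ball y₀ r, (x, t) ∈ Ω := by
    intro x hx t ht
    exact hball (by rw [← ball_prod_same]; exact ⟨hx, ht⟩)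
  -- pointwise PDE consequences
  have hE1 : ∀ q ∈ Ω, cpY (cpY η) q = 0 := by
    intro q hq
    have h0 := hpde q hq 0
    have h1 := hpde q hq 1
    have h2 := hpde q hq (-1)
    linear_combination (h1 + h2 - 2*h0)/2
  have hE2 : ∀ q ∈ Ω, 2 * cpX (cpY η) q * (q.1*(q.1+C)) + C * cpY η q = 0 := by
    intro q hq
    have h1 := hpde q hq 1
    have h2 := hpde q hq (-1)
    have hx := hx0 q hq
    have hc := hxC q hq
    have e2 : 2 * cpX (cpY η) q + cpY η q / q.1 = cpY η q / (q.1+C) := by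
      linear_combination (h1 - h2)/2
    field_simp at e2
    linear_combination e2
  have hE3 : ∀ q ∈ Ω, cpX (cpX η) q * (q.1^3*(q.1+C)^3) + 4*q.2^2 * cpY η q * (q.1+C)^3
      = cpX η q * (q.1^3*(q.1+C)^2) + 4*(η q)^2 * q.1^3 := by
    intro q hq
    have h0 := hpde q hq 0
    have hx := hx0 q hq
    have hc := hxC q hq
    field_simp at h0
    linear_combination h0
  -- slice analyticity
  have hvert : ∀ x : ℂ, AnalyticOnNhd ℂ (fun s => η (x, s)) {s : ℂ | (x, s) ∈ Ω} := by
    intro x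
    have hopen : IsOpen {s : ℂ | (x, s) ∈ Ω} := hΩo.preimage (Continuous.prodMk_right x)
    refine DifferentiableOn.analyticOnNhd (fun s hs => DifferentiableAt.differentiableWithinAt ?_) hopen
    exact (hη.differentiableAt (hΩo.mem_nhds hs)).comp s
      ((differentiableAt_const x).prodMk differentiableAt_id)
  have hhor : ∀ t : ℂ, AnalyticOnNhd ℂ (fun u => η (u, t)) {u : ℂ | (u, t) ∈ Ω} := by
    intro t
    have hopen : IsOpen {u : ℂ | (u, t) ∈ Ω} := hΩo.preimage (continuous_id.prodMk continuous_const)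
    refine DifferentiableOn.analyticOnNhd (fun s hs => DifferentiableAt.differentiableWithinAt ?_) hopen
    exact (hη.differentiableAt (hΩo.mem_nhds hs)).comp s
      (differentiableAt_id.prodMk (differentiableAt_const t))
  have hy₀ : y₀ ∈ ball y₀ r := Metric.mem_ball_self hr0
  have hx₀B : x₀ ∈ ball x₀ r := Metric.mem_ball_self hr0
  -- constancy of cpY η in the vertical direction
  have hA : ∀ x ∈ ball x₀ r, ∀ t ∈ ball y₀ r, cpY η (x, t) = cpY η (x, y₀) := by
    intro x hx t ht
    have hopen : IsOpen {s : ℂ | (x, s) ∈ Ω} := hΩo.preimage (Continuous.prodMk_right x)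
    have han := (hvert x).deriv_of_isOpen hopen
    refine constOf (convex_ball y₀ r) Metric.isOpen_ball (fun s hs => ?_) ht hy₀
    have hda : DifferentiableAt ℂ (deriv (fun u => η (x, u))) s :=
      (han s (hmem x hx s hs)).differentiableAt
    have h1 := hda.hasDerivAt
    have h0 : deriv (deriv (fun u => η (x, u))) s = 0 := hE1 (x, s) (hmem x hx s hs)
    rwa [h0] at h1
  -- linearity of η in the vertical direction
  have hB : ∀ x ∈ ball x₀ r, ∀ t ∈ ball y₀ r,
      η (x, t) = η (x, y₀) + cpY η (x, y₀) * (t - y₀) := by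
    intro x hx t ht
    have key : (fun s => η (x, s) - cpY η (x, y₀) * s) t
        = (fun s => η (x, s) - cpY η (x, y₀) * s) y₀ := by
      refine constOf (f := fun s => η (x, s) - cpY η (x, y₀) * s)
        (convex_ball y₀ r) Metric.isOpen_ball (fun s hs => ?_) ht hy₀
      have h1 : HasDerivAt (fun u => η (x, u)) (cpY η (x, s)) s :=
        (((hvert x) s (hmem x hx s hs)).differentiableAt).hasDerivAt
      have h2 : HasDerivAt (fun u => cpY η (x, y₀) * u) (cpY η (x, y₀)) s := by
        simpa using (hasDerivAt_id s).const_mul (cpY η (x, y₀))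
      have h3 := h1.sub h2
      rwa [hA x hx s hs, sub_self] at h3
    simp only at key
    linear_combination key
  -- the three sample points
  set ε : ℂ := ((r/2 : ℝ) : ℂ) with hεdef
  have hε : ε ≠ 0 := by
    simp only [hεdef, ne_eq, Complex.ofReal_eq_zero]
    positivity
  have hnε : ‖ε‖ = r/2 := by
    rw [hεdef, Complex.norm_real, Real.norm_eq_abs, abs_of_pos (by positivity)]
  have hyp : y₀ + ε ∈ ball y₀ r := by
    rw [mem_ball, dist_eq_norm, add_sub_cancel_left, hnε]
    linarith
  have hym : y₀ - ε ∈ ball y₀ r := by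
    rw [mem_ball, dist_eq_norm, sub_sub_cancel_left, norm_neg, hnε]
    linarith
  -- σ and b
  set σ : ℂ → ℂ := fun u => cpY η (u, y₀) with hσdef
  set b : ℂ → ℂ := fun u => η (u, y₀) - cpY η (u, y₀) * y₀ with hbdef
  have hη2 : ∀ x ∈ ball x₀ r, ∀ t ∈ ball y₀ r, η (x, t) = b x + σ x * t := by
    intro x hx t ht
    have h := hB x hx t ht
    simp only [hσdef, hbdef]
    linear_combination h
  have hs2 : ∀ x ∈ ball x₀ r, ∀ t ∈ ball y₀ r, cpY η (x, t) = σ x := by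
    intro x hx t ht
    exact hA x hx t ht
  -- analyticity of σ and b on the horizontal ball
  have hσan : AnalyticOnNhd ℂ σ (ball x₀ r) := by
    intro x hx
    have h1 : AnalyticAt ℂ (fun u => (η (u, y₀ + ε) - η (u, y₀)) * ε⁻¹) x :=
      ((((hhor (y₀ + ε)) x (hmem x hx _ hyp)).sub ((hhor y₀) x (hmem x hx _ hy₀)))).mul
        analyticAt_const
    refine h1.congr ?_
    filter_upwards [Metric.isOpen_ball.mem_nhds hx] with u hu
    have e1 := hη2 u hu (y₀ + ε) hyp
    have e0 := hη2 u hu y₀ hy₀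
    have hεinv : ε * ε⁻¹ = 1 := mul_inv_cancel₀ hε
    linear_combination ε⁻¹ * (e1 - e0) + (σ u) * hεinv
  have hban : AnalyticOnNhd ℂ b (ball x₀ r) := by
    intro x hx
    exact ((hhor y₀) x (hmem x hx _ hy₀)).sub ((hσan x hx).mul analyticAt_const)
  have hσ'an : AnalyticOnNhd ℂ (deriv σ) (ball x₀ r) :=
    hσan.deriv_of_isOpen Metric.isOpen_ball
  have hb'an : AnalyticOnNhd ℂ (deriv b) (ball x₀ r) :=
    hban.deriv_of_isOpen Metric.isOpen_ball
  -- horizontal partial derivatives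
  have c1 : ∀ x ∈ ball x₀ r, ∀ t ∈ ball y₀ r, cpX η (x, t) = deriv b x + deriv σ x * t := by
    intro x hx t ht
    have heq : (fun u => η (u, t)) =ᶠ[nhds x] (fun u => b u + σ u * t) := by
      filter_upwards [Metric.isOpen_ball.mem_nhds hx] with u hu using hη2 u hu t ht
    have h1 : cpX η (x, t) = deriv (fun u => b u + σ u * t) x := heq.deriv_eq
    rw [h1, deriv_fun_add ((hban x hx).differentiableAt) (((hσan x hx).differentiableAt).mul_const t),
      deriv_mul_const ((hσan x hx).differentiableAt)]
  have c2 : ∀ x ∈ ball x₀ r, ∀ t ∈ ball y₀ r, cpX (cpY η) (x, t) = deriv σ x := by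
    intro x hx t ht
    have heq : (fun u => cpY η (u, t)) =ᶠ[nhds x] σ := by
      filter_upwards [Metric.isOpen_ball.mem_nhds hx] with u hu using hs2 u hu t ht
    exact heq.deriv_eq
  have c3 : ∀ x ∈ ball x₀ r, ∀ t ∈ ball y₀ r,
      cpX (cpX η) (x, t) = deriv (deriv b) x + deriv (deriv σ) x * t := by
    intro x hx t ht
    have heq : (fun u => cpX η (u, t)) =ᶠ[nhds x] (fun u => deriv b u + deriv σ u * t) := by
      filter_upwards [Metric.isOpen_ball.mem_nhds hx] with u hu using c1 u hu t ht
    have h1 : cpX (cpX η) (x, t) = deriv (fun u => deriv b u + deriv σ u * t) x := heq.deriv_eq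
    rw [h1, deriv_fun_add ((hb'an x hx).differentiableAt) (((hσ'an x hx).differentiableAt).mul_const t),
      deriv_mul_const ((hσ'an x hx).differentiableAt)]
  -- the quadratic identity in t
  have P : ∀ x ∈ ball x₀ r, ∀ t ∈ ball y₀ r,
      (deriv (deriv b) x + deriv (deriv σ) x * t) * (x^3*(x+C)^3) + 4*t^2*(σ x)*(x+C)^3
      = (deriv b x + deriv σ x * t) * (x^3*(x+C)^2) + 4*(b x + σ x * t)^2 * x^3 := by
    intro x hx t ht
    have h := hE3 (x, t) (hmem x hx t ht)
    simp only at h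
    rw [c3 x hx t ht, hs2 x hx t ht, c1 x hx t ht, hη2 x hx t ht] at h
    linear_combination h
  -- the coefficient of t²
  have hσx : ∀ x ∈ ball x₀ r, σ x * x^3 = (x+C)^3 := by
    intro x hx
    have hp := P x hx (y₀ + ε) hyp
    have hm := P x hx (y₀ - ε) hym
    have h0 := P x hx y₀ hy₀
    have hσ0 : σ x ≠ 0 := hηy (x, y₀) (hmem x hx y₀ hy₀)
    have key : ε^2 * (σ x * ((x+C)^3 - σ x * x^3)) = 0 := by
      linear_combination (hp + hm - 2*h0)/8
    have k1 := (mul_eq_zero.mp key).resolve_left (pow_ne_zero 2 hε)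
    have k2 := (mul_eq_zero.mp k1).resolve_left hσ0
    linear_combination -k2
  -- derivative of the t² relation at x₀
  have eqd : deriv σ x₀ * x₀^3 + σ x₀ * (3*x₀^2) = 3*(x₀+C)^2 := by
    have heq1 : (fun u => σ u * u^3) =ᶠ[nhds x₀] (fun u => (u+C)^3) := by
      filter_upwards [Metric.isOpen_ball.mem_nhds hx₀B] with u hu using hσx u hu
    have h1 : deriv (fun u => σ u * u^3) x₀ = deriv σ x₀ * x₀^3 + σ x₀ * (3*x₀^2) := by
      rw [deriv_fun_mul ((hσan x₀ hx₀B).differentiableAt) (differentiableAt_pow 3), deriv_pow_field]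
      norm_num
    have h2 : deriv (fun u => (u+C)^3) x₀ = 3*(x₀+C)^2 := by
      have h : HasDerivAt (fun u => (u+C)^3) (3*(x₀+C)^2) x₀ := by
        have := ((hasDerivAt_id x₀).add_const C).pow 3
        norm_num at this
        exact this
      exact h.deriv
    rw [← h1, heq1.deriv_eq, h2]
  -- the E2 relation at (x₀, y₀)
  have eq3 : 2 * deriv σ x₀ * (x₀*(x₀+C)) + C * σ x₀ = 0 := by
    have h := hE2 (x₀, y₀) hq₀
    simp only at h
    rw [c2 x₀ hx₀B y₀ hy₀] at h
    exact h
  -- C = 0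
  have hcne : x₀ + C ≠ 0 := hxC (x₀, y₀) hq₀
  have eq1 := hσx x₀ hx₀B
  have hC : C = 0 := by
    have h5 : C * (x₀+C)^3 = 0 := by
      linear_combination ((C - 6*(x₀+C))/5) * eq1 + ((2*x₀*(x₀+C))/5) * eqd + (-(x₀^3)/5) * eq3
    exact (mul_eq_zero.mp h5).resolve_right (pow_ne_zero 3 hcne)
  subst hC
  refine ⟨rfl, ?_⟩
  have hx₀ne : x₀ ≠ 0 := hx0 (x₀, y₀) hq₀
  -- σ = 1 on the ball
  have hσ1 : ∀ x ∈ ball x₀ r, σ x = 1 := by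
    intro x hx
    have h := hσx x hx
    have hx' : x ≠ 0 := hx0 (x, y₀) (hmem x hx y₀ hy₀)
    refine mul_right_cancel₀ (pow_ne_zero 3 hx') ?_
    rw [one_mul]
    linear_combination h
  have hdσ : ∀ x ∈ ball x₀ r, deriv σ x = 0 := by
    intro x hx
    have heq : σ =ᶠ[nhds x] (fun _ => (1:ℂ)) := by
      filter_upwards [Metric.isOpen_ball.mem_nhds hx] with u hu using hσ1 u hu
    rw [heq.deriv_eq, deriv_const]
  have hd2σ : deriv (deriv σ) x₀ = 0 := by
    have heq : deriv σ =ᶠ[nhds x₀] (fun _ => (0:ℂ)) := by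
      filter_upwards [Metric.isOpen_ball.mem_nhds hx₀B] with u hu using hdσ u hu
    rw [heq.deriv_eq, deriv_const]
  -- b x₀ = 0
  have hb0 : b x₀ = 0 := by
    have hp := P x₀ hx₀B (y₀ + ε) hyp
    have hm := P x₀ hx₀B (y₀ - ε) hym
    rw [hσ1 x₀ hx₀B, hdσ x₀ hx₀B, hd2σ] at hp hm
    have key : ε * (b x₀ * x₀^3) = 0 := by
      linear_combination (hm - hp)/16
    have k1 := (mul_eq_zero.mp key).resolve_left hε
    exact (mul_eq_zero.mp k1).resolve_right (pow_ne_zero 3 hx₀ne)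
  have := hη2 x₀ hx₀B y₀ hy₀
  rw [this, hb0, hσ1 x₀ hx₀B, zero_add, one_mul]

end Helpers

/-- The Φ₃-symmetry pseudo-group of Reid's equation
`y'' = y'/x + 4y²/x³` is trivial: any symmetry `x̄ = x + C`, `ȳ = η(x,y)` has
`C = 0` and `η(x,y) = y`. -/
theorem statement15 (C : ℂ) (Ω : Set (ℂ × ℂ)) (hΩo : IsOpen Ω) (hΩc : IsConnected Ω)
    (hx0 : ∀ q ∈ Ω, q.1 ≠ 0) (hxC : ∀ q ∈ Ω, q.1 + C ≠ 0)
    (η : ℂ × ℂ → ℂ) (hη : DifferentiableOn ℂ η Ω)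
    (hηy : ∀ q ∈ Ω, cpY η q ≠ 0)
    (hpde : ∀ q ∈ Ω, ∀ p : ℂ,
      cpX (cpX η) q + 2 * p * cpX (cpY η) q + p^2 * cpY (cpY η) q
        + (p / q.1 + 4 * q.2^2 / q.1^3) * cpY η q
      = (cpX η q + p * cpY η q) / (q.1 + C) + 4 * (η q)^2 / (q.1 + C)^3) :
    C = 0 ∧ ∀ q ∈ Ω, η q = q.2 := by
  obtain ⟨q₀, hq₀⟩ := hΩc.nonempty
  have h0 := aux C Ω hΩo hx0 hxC η hη hηy hpde q₀.1 q₀.2 hq₀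
  refine ⟨h0.1, fun q hq => ?_⟩
  exact (aux C Ω hΩo hx0 hxC η hη hηy hpde q.1 q.2 hq).2
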